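/- For all a, b > 0: exp((1/8)·(b−a)²/max(a,b)²) ≤ ((a+b)/2)/√(a·b) ≤ exp((1/8)·(b−a)²/min(a,b)²). -/

import Mathlib

open Real Set

lemma keyA (t : ℝ) (ht : 1 ≤ t) :
    (t - 1)^2 / (8 * t^2) ≤ Real.log (1 + t) - Real.log 2 - Real.log t / 2 := by
  set g : ℝ → ℝ := fun x => Real.log (1 + x) - Real.log 2 - Real.log x / 2
      - (x - 1)^2 / (8 * x^2) with hg
  have hasDeriv : ∀ x : ℝ, 0 < x → HasDerivAt g ((x - 1)^2 * (2*x + 1) / (4 * x^3 * (1 + x))) x := by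
    intro x hx
    have h3 : HasDerivAt (fun x : ℝ => Real.log (1 + x)) (1 / (1 + x)) x := by
      have := ((hasDerivAt_id x).const_add 1).log (by positivity : (1 : ℝ) + x ≠ 0)
      simpa using this
    have h2 : HasDerivAt Real.log x⁻¹ x := Real.hasDerivAt_log hx.ne'
    have h4 : HasDerivAt (fun x : ℝ => (x - 1)^2 / (8 * x^2))
        ((2 * (x - 1) * (8 * x^2) - (x - 1)^2 * (16 * x)) / (8 * x^2)^2) x := by
      have hnum : HasDerivAt (fun x : ℝ => (x - 1)^2) (2 * (x - 1)) x := by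
        have := (((hasDerivAt_id x).sub_const 1).fun_pow 2)
        simpa using this
      have hden : HasDerivAt (fun x : ℝ => 8 * x^2) (16 * x) x := by
        have := ((hasDerivAt_id x).fun_pow 2).const_mul (8 : ℝ)
        refine this.congr_deriv ?_
        simp; ring
      have := hnum.fun_div hden (by positivity)
      convert this using 1
    have := ((h3.sub_const (Real.log 2)).sub (h2.div_const 2)).sub h4
    refine this.congr_deriv ?_
    field_simp
    ring
  have mono : MonotoneOn g (Set.Ici 1) := by
    apply monotoneOn_of_deriv_nonneg (convex_Ici 1)
    · intro x hx
      exact (hasDeriv x (by linarith [mem_Ici.mp hx])).continuousAt.continuousWithinAt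
    · intro x hx
      rw [interior_Ici] at hx
      exact (hasDeriv x (by linarith [mem_Ioi.mp hx])).differentiableAt.differentiableWithinAt
    · intro x hx
      rw [interior_Ici] at hx
      have hx1 : 1 < x := hx
      rw [(hasDeriv x (by linarith)).deriv]
      apply div_nonneg
      · nlinarith [sq_nonneg (x - 1)]
      · nlinarith [pow_pos (show (0:ℝ) < x by linarith) 3]
  have g1 : g 1 = 0 := by
    simp [hg, show (1:ℝ) + 1 = 2 by norm_num]
  have := mono (mem_Ici.mpr le_rfl) (mem_Ici.mpr ht) ht
  rw [g1] at this
  simp only [hg] at this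
  linarith

lemma keyB (t : ℝ) (ht : 1 ≤ t) :
    Real.log (1 + t) - Real.log 2 - Real.log t / 2 ≤ (t - 1)^2 / 8 := by
  set g : ℝ → ℝ := fun x => (x - 1)^2 / 8 + Real.log 2 + Real.log x / 2
      - Real.log (1 + x) with hg
  have hasDeriv : ∀ x : ℝ, 0 < x → HasDerivAt g ((x - 1)^2 * (x + 2) / (4 * x * (1 + x))) x := by
    intro x hx
    have h1 : HasDerivAt (fun x : ℝ => (x - 1)^2 / 8) ((x - 1) / 4) x := by
      have := (((hasDerivAt_id x).sub_const 1).fun_pow 2).div_const 8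
      refine this.congr_deriv ?_
      simp; ring
    have h2 : HasDerivAt Real.log x⁻¹ x := Real.hasDerivAt_log hx.ne'
    have h3 : HasDerivAt (fun x : ℝ => Real.log (1 + x)) (1 / (1 + x)) x := by
      have := ((hasDerivAt_id x).const_add 1).log (by positivity : (1 : ℝ) + x ≠ 0)
      simpa using this
    have := ((h1.add_const (Real.log 2)).add (h2.div_const 2)).sub h3
    refine this.congr_deriv ?_
    field_simp
    ring
  have mono : MonotoneOn g (Set.Ici 1) := by
    apply monotoneOn_of_deriv_nonneg (convex_Ici 1)
    · intro x hx
      exact (hasDeriv x (by linarith [mem_Ici.mp hx])).continuousAt.continuousWithinAt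
    · intro x hx
      rw [interior_Ici] at hx
      exact (hasDeriv x (by linarith [mem_Ioi.mp hx])).differentiableAt.differentiableWithinAt
    · intro x hx
      rw [interior_Ici] at hx
      have hx1 : 1 < x := hx
      rw [(hasDeriv x (by linarith)).deriv]
      apply div_nonneg
      · nlinarith [sq_nonneg (x - 1)]
      · nlinarith
  have g1 : g 1 = 0 := by
    simp [hg, show (1:ℝ) + 1 = 2 by norm_num]
  have := mono (mem_Ici.mpr le_rfl) (mem_Ici.mpr ht) ht
  rw [g1] at this
  simp only [hg] at this
  linarith

lemma half_stmt (a b : ℝ) (ha : 0 < a) (hb : 0 < b) (hab : a ≤ b) :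
    Real.exp (1/8 * (b - a)^2 / (max a b)^2) ≤ ((a + b)/2) / Real.sqrt (a * b) ∧
    ((a + b)/2) / Real.sqrt (a * b) ≤ Real.exp (1/8 * (b - a)^2 / (min a b)^2) := by
  have hM : 0 < ((a + b)/2) / Real.sqrt (a * b) := by
    apply div_pos (by linarith)
    exact Real.sqrt_pos.mpr (by positivity)
  have hlogM : Real.log (((a + b)/2) / Real.sqrt (a * b))
      = Real.log (1 + b/a) - Real.log 2 - Real.log (b/a) / 2 := by
    rw [Real.log_div (by positivity) (Real.sqrt_ne_zero'.mpr (by positivity)),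
        Real.log_div (by positivity) two_ne_zero,
        Real.log_sqrt (by positivity), Real.log_mul ha.ne' hb.ne',
        show (1 : ℝ) + b/a = (a + b)/a by field_simp,
        Real.log_div (by positivity) ha.ne', Real.log_div hb.ne' ha.ne']
    ring
  have ht : 1 ≤ b/a := (one_le_div ha).mpr hab
  have k1 := keyA (b/a) ht
  have k2 := keyB (b/a) ht
  constructor
  · rw [max_eq_right hab]
    have harg : 1/8 * (b - a)^2 / b^2 = (b/a - 1)^2 / (8 * (b/a)^2) := by
      rw [div_eq_div_iff (by positivity) (by positivity)]; field_simp <;> ring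
    calc Real.exp (1/8 * (b - a)^2 / b^2)
        = Real.exp ((b/a - 1)^2 / (8 * (b/a)^2)) := by rw [harg]
      _ ≤ Real.exp (Real.log (((a + b)/2) / Real.sqrt (a * b))) := by
          rw [hlogM]; exact Real.exp_le_exp.mpr k1
      _ = ((a + b)/2) / Real.sqrt (a * b) := Real.exp_log hM
  · rw [min_eq_left hab]
    calc ((a + b)/2) / Real.sqrt (a * b)
        = Real.exp (Real.log (((a + b)/2) / Real.sqrt (a * b))) := (Real.exp_log hM).symm
      _ ≤ Real.exp ((b/a - 1)^2 / 8) := by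
          rw [hlogM]; exact Real.exp_le_exp.mpr k2
      _ = Real.exp (1/8 * (b - a)^2 / a^2) := by
          have harg : (b/a - 1)^2 / 8 = 1/8 * (b - a)^2 / a^2 := by
            rw [div_eq_div_iff (by positivity) (by positivity)]; field_simp <;> ring
          rw [harg]

theorem stmt_6 (a b : ℝ) (ha : 0 < a) (hb : 0 < b) :
    Real.exp (1/8 * (b - a)^2 / (max a b)^2) ≤ ((a + b)/2) / Real.sqrt (a * b) ∧
    ((a + b)/2) / Real.sqrt (a * b) ≤ Real.exp (1/8 * (b - a)^2 / (min a b)^2) := by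
  rcases le_total a b with h | h
  · exact half_stmt a b ha hb h
  · have := half_stmt b a hb ha h
    rwa [max_comm b a, min_comm b a, add_comm b a, mul_comm b a,
      show (a - b)^2 = (b - a)^2 by ring] at this
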